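/- For every integer α ≥ 1 there exist consistent row sums and column sums with parameter α (i.e., (1/2)Σ_j |c_j − v_j| = α where v is the conjugate of the row sums) that admit at least two solutions, and such that every pair of finite sets F₂, F₃ ⊆ ℤ² realizing these line sums satisfies |F₂ △ F₃| ≤ 2α + 2. -/

import Mathlib

open Finset

/-- Number of elements of `F` in row `i`. -/
def rowSum (F : Finset (ℤ × ℤ)) (i : ℤ) : ℕ := (F.filter fun p => p.1 = i).card

/-- Number of elements of `F` in column `j`. -/
def colSum (F : Finset (ℤ × ℤ)) (j : ℤ) : ℕ := (F.filter fun p => p.2 = j).card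

/-- `F` has row sums `r` on rows `1..m`, column sums `c` on columns `1..n`,
and zero line sums elsewhere. -/
def hasLineSums (F : Finset (ℤ × ℤ)) (m n : ℕ) (r : Fin m → ℕ) (c : Fin n → ℕ) : Prop :=
  (∀ i : Fin m, rowSum F ((i : ℤ) + 1) = r i) ∧
  (∀ i : ℤ, (∀ k : Fin m, (k : ℤ) + 1 ≠ i) → rowSum F i = 0) ∧
  (∀ j : Fin n, colSum F ((j : ℤ) + 1) = c j) ∧
  (∀ j : ℤ, (∀ k : Fin n, (k : ℤ) + 1 ≠ j) → colSum F j = 0)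

/-- The conjugate partition: `conj m r j = #{l : r l ≥ j}`. -/
def conj (m : ℕ) (r : Fin m → ℕ) (j : ℕ) : ℕ := (Finset.univ.filter fun l => j ≤ r l).card

lemma card_of_lineSums {F : Finset (ℤ × ℤ)} {m n : ℕ} {r : Fin m → ℕ} {c : Fin n → ℕ}
    (h : hasLineSums F m n r c) : F.card = ∑ k : Fin m, r k := by
  obtain ⟨h1, h2, -, -⟩ := h
  have hsub : ∀ p ∈ F, p.1 ∈ (Finset.univ.image fun k : Fin m => (k : ℤ) + 1) := by
    intro p hp
    by_contra hc
    have hall : ∀ k : Fin m, (k : ℤ) + 1 ≠ p.1 := fun k hk =>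
      hc (Finset.mem_image.2 ⟨k, Finset.mem_univ k, hk⟩)
    have h0 := h2 p.1 hall
    have hmem : p ∈ F.filter fun q => q.1 = p.1 := Finset.mem_filter.2 ⟨hp, rfl⟩
    have : (F.filter fun q => q.1 = p.1).card ≠ 0 :=
      Finset.card_ne_zero_of_mem hmem
    exact this h0
  rw [Finset.card_eq_sum_card_fiberwise hsub, Finset.sum_image]
  · exact Finset.sum_congr rfl fun k _ => h1 k
  · intro a _ b _ hab
    exact Fin.ext (by simp only at hab; omega)

lemma perm_lineSums (m : ℕ) (σ : Equiv.Perm (Fin m)) :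
    hasLineSums (Finset.univ.image fun k : Fin m => ((k : ℤ) + 1, (σ k : ℤ) + 1))
      m m (fun _ => 1) (fun _ => 1) := by
  refine ⟨?_, ?_, ?_, ?_⟩
  · intro i
    unfold rowSum
    rw [Finset.filter_image]
    have : (Finset.univ.filter fun k : Fin m =>
        (((k : ℤ) + 1, (σ k : ℤ) + 1) : ℤ × ℤ).1 = (i : ℤ) + 1) = {i} := by
      ext k
      simp only [Finset.mem_filter, Finset.mem_univ, true_and, Finset.mem_singleton]
      constructor
      · intro hk; exact Fin.ext (by omega)
      · rintro rfl; rfl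
    rw [this, Finset.image_singleton, Finset.card_singleton]
  · intro i hi
    unfold rowSum
    rw [Finset.filter_image]
    have : (Finset.univ.filter fun k : Fin m =>
        (((k : ℤ) + 1, (σ k : ℤ) + 1) : ℤ × ℤ).1 = i) = ∅ := by
      ext k
      simp only [Finset.mem_filter, Finset.mem_univ, true_and, Finset.notMem_empty,
        iff_false]
      exact hi k
    rw [this]; simp
  · intro j
    unfold colSum
    rw [Finset.filter_image]
    have : (Finset.univ.filter fun k : Fin m =>
        (((k : ℤ) + 1, (σ k : ℤ) + 1) : ℤ × ℤ).2 = (j : ℤ) + 1) = {σ.symm j} := by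
      ext k
      simp only [Finset.mem_filter, Finset.mem_univ, true_and, Finset.mem_singleton]
      constructor
      · intro hk
        have : σ k = j := Fin.ext (by omega)
        rw [← this, Equiv.symm_apply_apply]
      · rintro rfl; rw [Equiv.apply_symm_apply]
    rw [this, Finset.image_singleton, Finset.card_singleton]
  · intro j hj
    unfold colSum
    rw [Finset.filter_image]
    have : (Finset.univ.filter fun k : Fin m =>
        (((k : ℤ) + 1, (σ k : ℤ) + 1) : ℤ × ℤ).2 = j) = ∅ := by
      ext k
      simp only [Finset.mem_filter, Finset.mem_univ, true_and, Finset.notMem_empty,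
        iff_false]
      exact hj (σ k)
    rw [this]; simp

theorem stmt17 (α : ℕ) (hα : 1 ≤ α) :
    ∃ (m n : ℕ) (r : Fin m → ℕ) (c : Fin n → ℕ),
      Antitone r ∧ Antitone c ∧
      (∃ F : Finset (ℤ × ℤ), hasLineSums F m n r c) ∧
      (2 * α = ∑ j : Fin n, ((c j : ℤ) - (conj m r ((j : ℕ) + 1) : ℤ)).natAbs) ∧
      (∃ F₂ F₃ : Finset (ℤ × ℤ),
        hasLineSums F₂ m n r c ∧ hasLineSums F₃ m n r c ∧ F₂ ≠ F₃) ∧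
      ∀ F₂ F₃ : Finset (ℤ × ℤ),
        hasLineSums F₂ m n r c → hasLineSums F₃ m n r c →
        ((F₂ \ F₃) ∪ (F₃ \ F₂)).card ≤ 2 * α + 2 := by
  refine ⟨α + 1, α + 1, fun _ => 1, fun _ => 1, antitone_const, antitone_const, ?_, ?_, ?_, ?_⟩
  · exact ⟨_, perm_lineSums (α + 1) (Equiv.refl _)⟩
  · -- conjugate sum
    rw [Fin.sum_univ_succ]
    have h0 : conj (α + 1) (fun _ => 1) (((0 : Fin (α + 1)) : ℕ) + 1) = α + 1 := by
      unfold conj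
      simp
    have hs : ∀ j : Fin α, conj (α + 1) (fun _ => 1) (((j.succ : Fin (α + 1)) : ℕ) + 1) = 0 := by
      intro j
      unfold conj
      rw [Finset.card_eq_zero]
      ext k
      simp
    rw [h0]
    have : ∑ j : Fin α, ((((fun _ => 1) (j.succ) : ℕ) : ℤ) -
        (conj (α + 1) (fun _ => 1) (((j.succ : Fin (α + 1)) : ℕ) + 1) : ℤ)).natAbs = α := by
      rw [Finset.sum_congr rfl fun j _ => by rw [hs j]]
      simp
    simp only [this]
    simp
    omega
  · -- two distinct solutions
    refine ⟨_, _, perm_lineSums (α + 1) (Equiv.refl _),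
      perm_lineSums (α + 1) (Equiv.swap ⟨0, by omega⟩ ⟨1, by omega⟩), ?_⟩
    intro h
    have hmem : ((1 : ℤ), (2 : ℤ)) ∈
        Finset.univ.image fun k : Fin (α + 1) =>
          ((k : ℤ) + 1, ((Equiv.swap (⟨0, by omega⟩ : Fin (α + 1)) ⟨1, by omega⟩) k : ℤ) + 1) := by
      refine Finset.mem_image.2 ⟨⟨0, by omega⟩, Finset.mem_univ _, ?_⟩
      rw [Equiv.swap_apply_left]
      simp
    rw [← h] at hmem
    obtain ⟨k, -, hk⟩ := Finset.mem_image.1 hmem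
    have h1 : ((k : ℤ) + 1 : ℤ) = 1 := congrArg Prod.fst hk
    have h2 : (((Equiv.refl (Fin (α+1))) k : ℤ) + 1 : ℤ) = 2 := congrArg Prod.snd hk
    simp at h1 h2
    subst h1
    simp at h2
  · intro F₂ F₃ h₂ h₃
    have c₂ := card_of_lineSums h₂
    have c₃ := card_of_lineSums h₃
    simp at c₂ c₃
    calc ((F₂ \ F₃) ∪ (F₃ \ F₂)).card ≤ (F₂ \ F₃).card + (F₃ \ F₂).card :=
          Finset.card_union_le _ _
      _ ≤ F₂.card + F₃.card :=
          Nat.add_le_add (Finset.card_le_card (Finset.sdiff_subset))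
            (Finset.card_le_card (Finset.sdiff_subset))
      _ ≤ 2 * α + 2 := by omega
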